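/- arXiv:1310.8021 — 2 statements merged into one kernel-verified Lean document; each statement's English description precedes it below -/
import Mathlib

section
/- Let g(x) = (x - x_1)···(x - x_m) be a monic polynomial of degree m with roots x_1,...,x_m, and let C be its companion matrix (with C(i, j) = 1 if i = j+1 for j ≤ m-1, C(i, m) = (-1)^{m-i} e_{m-i+1}(x_1,...,x_m), and all other entries 0). Then for all t ≥ 0 and all 1 ≤ i, j ≤ m: if t + j - m ≥ 1, then C^t(i, j) = (-1)^{m-i} s_{(t+j-m, 1,...,1 with m-i ones)}(x_1,...,x_m); and if t + j - m < 1, then C^t(i, j) = 1 if i = t + j and 0 otherwise. -/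
/-- Semistandard Young tableaux of hook shape `(k, 1^ℓ)` on the alphabet `{1,...,m}`. -/
abbrev HookSSYT (m k ℓ : ℕ) : Type :=
  {p : (Fin k → Fin m) × (Fin ℓ → Fin m) //
    Monotone p.1 ∧ StrictMono p.2 ∧
    ∀ (h0 : 0 < k) (h1 : 0 < ℓ), p.1 ⟨0, h0⟩ < p.2 ⟨0, h1⟩}

/-- The Schur polynomial of the hook shape `(k, 1^ℓ)` in `m` variables. -/
noncomputable def hookSchur (R : Type*) [CommRing R] (m k ℓ : ℕ) (x : Fin m → R) : R :=
  ∑ᶠ T : HookSSYT m k ℓ, (∏ i, x (T.1.1 i)) * ∏ j, x (T.1.2 j)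

/-- The elementary symmetric polynomial `e_ℓ` in the variables `x_1, ..., x_m`. -/
noncomputable def esymmF (R : Type*) [CommRing R] (m : ℕ) (x : Fin m → R) (ℓ : ℕ) : R :=
  ∑ S ∈ Finset.univ.powersetCard ℓ, ∏ i ∈ S, x i

/- helpers -/

lemma cons_mono {m n : ℕ} {y : Fin m} {f : Fin n → Fin m} (hf : Monotone f)
    (hy : ∀ i, y ≤ f i) : Monotone (Fin.cons y f) := by
  intro a b hab
  induction a using Fin.cases with
  | zero =>
      induction b using Fin.cases with
      | zero => exact le_refl _
      | succ jb => simp only [Fin.cons_zero, Fin.cons_succ]; exact hy jb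
  | succ ia =>
      induction b using Fin.cases with
      | zero => exact absurd hab (by rw [Fin.le_def]; simp)
      | succ jb =>
          simp only [Fin.cons_succ]
          exact hf (Fin.succ_le_succ_iff.mp hab)

lemma cons_smono {m n : ℕ} {y : Fin m} {f : Fin n → Fin m} (hf : StrictMono f)
    (hy : ∀ i, y < f i) : StrictMono (Fin.cons y f) := by
  intro a b hab
  induction a using Fin.cases with
  | zero =>
      induction b using Fin.cases with
      | zero => exact absurd hab (lt_irrefl _)
      | succ jb => simp only [Fin.cons_zero, Fin.cons_succ]; exact hy jb
  | succ ia =>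
      induction b using Fin.cases with
      | zero => exact absurd hab (by rw [Fin.lt_def]; simp)
      | succ jb =>
          simp only [Fin.cons_succ]
          exact hf (Fin.succ_lt_succ_iff.mp hab)

lemma smono_bound {ℓ m : ℕ} {c : Fin ℓ → Fin m} (hc : StrictMono c) :
    ∀ (n : ℕ) (hn : n < ℓ) (h0 : 0 < ℓ), n + (c ⟨0, h0⟩ : ℕ) ≤ (c ⟨n, hn⟩ : ℕ) := by
  intro n
  induction n with
  | zero => intro hn h0; simp
  | succ k ih =>
      intro hn h0
      have hk : k < ℓ := by omega
      have h2 : (c ⟨k, hk⟩ : ℕ) < (c ⟨k + 1, hn⟩ : ℕ) := hc (by simp [Fin.lt_def])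
      have := ih hk h0
      omega

lemma hookSchur_eq_sum (m k ℓ : ℕ) (x : Fin m → ℂ) [Fintype (HookSSYT m k ℓ)] :
    hookSchur ℂ m k ℓ x = ∑ T : HookSSYT m k ℓ, (∏ i, x (T.1.1 i)) * ∏ j, x (T.1.2 j) :=
  finsum_eq_sum_of_fintype _

/-- L4 : hook with leg ≥ m and arm ≥ 1 vanishes. -/
lemma hookSchur_eq_zero (m a ℓ : ℕ) (x : Fin m → ℂ) (ha : 1 ≤ a) (hℓ : m ≤ ℓ) :
    hookSchur ℂ m a ℓ x = 0 := by
  have : IsEmpty (HookSSYT m a ℓ) := by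
    constructor
    rintro ⟨⟨r, c⟩, hr, hc, hrc⟩
    dsimp only at hr hc hrc
    have hm : 0 < m := (r ⟨0, ha⟩).pos
    have h0 : 0 < ℓ := by omega
    have hb := smono_bound hc (ℓ - 1) (by omega) h0
    have h1 : (r ⟨0, ha⟩ : ℕ) < (c ⟨0, h0⟩ : ℕ) := hrc ha h0
    have h2 : (c ⟨ℓ - 1, by omega⟩ : ℕ) < m := (c ⟨ℓ - 1, by omega⟩).isLt
    omega
  exact finsum_of_isEmpty _

/-- L2 : leg-only hooks are elementary symmetric polynomials. -/
lemma hookSchur_zero_arm (m ℓ : ℕ) (x : Fin m → ℂ) :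
    hookSchur ℂ m 0 ℓ x = esymmF ℂ m x ℓ := by
  classical
  haveI : Fintype (HookSSYT m 0 ℓ) := Fintype.ofFinite _
  rw [hookSchur_eq_sum, esymmF]
  refine Finset.sum_bij' (fun T _ => Finset.map ⟨T.1.2, T.2.2.1.injective⟩ Finset.univ)
    (fun S hS =>
      ⟨(Fin.elim0, fun k => S.orderEmbOfFin (Finset.mem_powersetCard.mp hS).2 k),
        fun a => a.elim0, (S.orderEmbOfFin _).strictMono,
        fun h0 _ => absurd h0 (lt_irrefl 0)⟩)
    ?_ ?_ ?_ ?_ ?_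
  · intro T _
    rw [Finset.mem_powersetCard]
    exact ⟨Finset.subset_univ _, by simp⟩
  · intro S hS
    exact Finset.mem_univ _
  · intro T hT
    apply Subtype.ext
    apply Prod.ext
    · exact funext fun k => k.elim0
    · have : T.1.2 = ⇑((Finset.map ⟨T.1.2, T.2.2.1.injective⟩ Finset.univ).orderEmbOfFin
        (by simp)) := by
        apply Finset.orderEmbOfFin_unique
        · intro k; simp
        · exact T.2.2.1
      exact this.symm
    
  · intro S hS
    ext a
    simp only [Finset.mem_map, Finset.mem_univ, true_and, Function.Embedding.coeFn_mk]
    constructor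
    · rintro ⟨b, _, rfl⟩
      have := Finset.range_orderEmbOfFin S (Finset.mem_powersetCard.mp hS).2
      have : S.orderEmbOfFin (Finset.mem_powersetCard.mp hS).2 b ∈ (S : Set (Fin m)) := by
        rw [← this]; exact Set.mem_range_self _
      simpa using this
    · intro haS
      have := Finset.range_orderEmbOfFin S (Finset.mem_powersetCard.mp hS).2
      have : a ∈ Set.range (S.orderEmbOfFin (Finset.mem_powersetCard.mp hS).2) := by
        rw [this]; simpa using haS
      rw [Set.mem_range] at this
      obtain ⟨b, hb⟩ := this
      exact ⟨b, hb⟩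
  · intro T _
    rw [Finset.prod_map]
    simp

/-- L5 : hook with arm 1 and leg ℓ equals the column of length ℓ+1. -/
lemma hookSchur_one_arm (m ℓ : ℕ) (x : Fin m → ℂ) :
    hookSchur ℂ m 1 ℓ x = hookSchur ℂ m 0 (ℓ + 1) x := by
  classical
  haveI : Fintype (HookSSYT m 1 ℓ) := Fintype.ofFinite _
  haveI : Fintype (HookSSYT m 0 (ℓ + 1)) := Fintype.ofFinite _
  rw [hookSchur_eq_sum, hookSchur_eq_sum]
  refine Finset.sum_bij' (fun T _ =>
      (⟨(Fin.elim0, Fin.cons (T.1.1 0) T.1.2), by intro u; exact u.elim0,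
        cons_smono T.2.2.1 (fun i => lt_of_lt_of_le (T.2.2.2 Nat.one_pos i.pos)
          (T.2.2.1.monotone (by simp [Fin.le_def]))),
        fun h0 _ => absurd h0 (lt_irrefl 0)⟩ : HookSSYT m 0 (ℓ + 1)))
    (fun T _ =>
      (⟨(fun _ => T.1.2 0, Fin.tail T.1.2), monotone_const,
        fun u v huv => T.2.2.1 (Fin.succ_lt_succ_iff.mpr huv),
        fun _ h1 => by
          simp only [Fin.tail, Fin.mk_zero]
          exact T.2.2.1 (Fin.succ_pos _)⟩ : HookSSYT m 1 ℓ))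
    (fun _ _ => Finset.mem_univ _) (fun _ _ => Finset.mem_univ _)
    ?_ ?_ ?_
  · intro T _
    apply Subtype.ext
    apply Prod.ext
    · funext k
      dsimp only
      rw [Fin.cons_zero]
      exact congrArg _ (Subsingleton.elim _ _)
    · dsimp only
      exact Fin.tail_cons _ _
  · intro T _
    apply Subtype.ext
    apply Prod.ext
    · funext k; exact k.elim0
    · dsimp only
      exact Fin.cons_self_tail _
  · intro T _
    simp [Fin.prod_univ_succ]

/-- L3 : Pieri rule for hooks. -/
lemma pieri (m a b : ℕ) (x : Fin m → ℂ) (ha : 0 < a) :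
    hookSchur ℂ m a 0 x * hookSchur ℂ m 0 (b + 1) x
      = hookSchur ℂ m a (b + 1) x + hookSchur ℂ m (a + 1) b x := by
  classical
  haveI : Fintype (HookSSYT m a 0) := Fintype.ofFinite _
  haveI : Fintype (HookSSYT m 0 (b + 1)) := Fintype.ofFinite _
  haveI : Fintype (HookSSYT m a (b + 1)) := Fintype.ofFinite _
  haveI : Fintype (HookSSYT m (a + 1) b) := Fintype.ofFinite _
  rw [hookSchur_eq_sum, hookSchur_eq_sum, hookSchur_eq_sum, hookSchur_eq_sum,
    Finset.sum_mul_sum]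
  rw [← Fintype.sum_prod_type
    (f := fun p : HookSSYT m a 0 × HookSSYT m 0 (b + 1) =>
      ((∏ i, x (p.1.1.1 i)) * ∏ j, x (p.1.1.2 j)) * ((∏ i, x (p.2.1.1 i)) * ∏ j, x (p.2.1.2 j)))]
  rw [← Finset.sum_filter_add_sum_filter_not Finset.univ
    (fun p : HookSSYT m a 0 × HookSSYT m 0 (b + 1) => p.1.1.1 ⟨0, ha⟩ < p.2.1.2 0)]
  congr 1
  · -- pairs with r0 < c0  ↦  hooks of shape (a, 1^{b+1})
    refine Finset.sum_bij' (fun p hp =>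
        (⟨(p.1.1.1, p.2.1.2), p.1.2.1, p.2.2.2.1, fun h0 h1 => by
          have hc := (Finset.mem_filter.mp hp).2
          simpa [Fin.mk_zero] using hc⟩ : HookSSYT m a (b + 1)))
      (fun T _ =>
        ((⟨(T.1.1, Fin.elim0), T.2.1, by intro u; exact u.elim0,
            fun _ h1 => absurd h1 (lt_irrefl 0)⟩ : HookSSYT m a 0),
         (⟨(Fin.elim0, T.1.2), by intro u; exact u.elim0, T.2.2.1,
            fun h0 _ => absurd h0 (lt_irrefl 0)⟩ : HookSSYT m 0 (b + 1))))
      ?_ ?_ ?_ ?_ ?_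
    · intro p _; exact Finset.mem_univ _
    · intro T _
      rw [Finset.mem_filter]
      refine ⟨Finset.mem_univ _, ?_⟩
      have := T.2.2.2 ha (Nat.succ_pos b)
      simpa [Fin.mk_zero] using this
    · intro p hp
      apply Prod.ext
      · apply Subtype.ext
        apply Prod.ext
        · rfl
        · funext k; exact k.elim0
      · apply Subtype.ext
        apply Prod.ext
        · funext k; exact k.elim0
        · rfl
    · intro T _
      apply Subtype.ext
      apply Prod.ext <;> rfl
    · intro p _
      simp
  · -- pairs with c0 ≤ r0  ↦  hooks of shape (a+1, 1^b)
    refine Finset.sum_bij' (fun p hp =>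
        (⟨(Fin.cons (p.2.1.2 0) p.1.1.1, Fin.tail p.2.1.2),
          cons_mono p.1.2.1 (fun i => by
            have hle : p.2.1.2 0 ≤ p.1.1.1 ⟨0, ha⟩ :=
              not_lt.mp (by simpa using (Finset.mem_filter.mp hp).2)
            exact le_trans hle (p.1.2.1 (by simp [Fin.le_def]))),
          fun u v huv => p.2.2.2.1 (Fin.succ_lt_succ_iff.mpr huv),
          fun h0 h1 => by
            dsimp only
            rw [show (⟨0, h0⟩ : Fin (a + 1)) = 0 from Fin.mk_zero, Fin.cons_zero]
            exact p.2.2.2.1 (Fin.succ_pos _)⟩ : HookSSYT m (a + 1) b))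
      (fun T _ =>
        ((⟨(Fin.tail T.1.1, Fin.elim0),
            fun u v huv => T.2.1 (Fin.succ_le_succ_iff.mpr huv),
            by intro u; exact u.elim0,
            fun _ h1 => absurd h1 (lt_irrefl 0)⟩ : HookSSYT m a 0),
         (⟨(Fin.elim0, Fin.cons (T.1.1 0) T.1.2),
            by intro u; exact u.elim0,
            cons_smono T.2.2.1 (fun i => lt_of_lt_of_le
              (by simpa [Fin.mk_zero] using T.2.2.2 (Nat.succ_pos a) i.pos)
              (T.2.2.1.monotone (by simp [Fin.le_def]))),
            fun h0 _ => absurd h0 (lt_irrefl 0)⟩ : HookSSYT m 0 (b + 1))))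
      ?_ ?_ ?_ ?_ ?_
    · intro p _; exact Finset.mem_univ _
    · intro T _
      rw [Finset.mem_filter]
      refine ⟨Finset.mem_univ _, ?_⟩
      dsimp only
      rw [not_lt, Fin.tail, Fin.cons_zero]
      exact T.2.1 (Fin.le_def.mpr (by simp))
    · intro p hp
      apply Prod.ext
      · apply Subtype.ext
        apply Prod.ext
        · dsimp only
          exact Fin.tail_cons _ _
        · funext k; exact k.elim0
      · apply Subtype.ext
        apply Prod.ext
        · funext k; exact k.elim0
        · dsimp only
          rw [Fin.cons_zero]
          exact Fin.cons_self_tail _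
    · intro T _
      apply Subtype.ext
      apply Prod.ext
      · dsimp only
        rw [Fin.cons_zero]
        exact Fin.cons_self_tail _
      · dsimp only
        exact Fin.tail_cons _ _
    · intro p _
      simp only [Fin.prod_univ_zero, mul_one, one_mul, Fin.prod_univ_succ,
        Fin.cons_zero, Fin.cons_succ, Fin.tail]
      ring

lemma row_mul (m : ℕ) (hm : 1 ≤ m) (x : Fin m → ℂ)
    (C A : Matrix (Fin m) (Fin m) ℂ)
    (hC : ∀ i j : Fin m, C i j =
      if (i : ℕ) = (j : ℕ) + 1 then 1
      else if (j : ℕ) = m - 1 then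
        (-1 : ℂ) ^ (m - 1 - (i : ℕ)) * esymmF ℂ m x (m - (i : ℕ))
      else 0) (i j : Fin m) :
    (C * A) i j =
      (-1 : ℂ) ^ (m - 1 - (i : ℕ)) * esymmF ℂ m x (m - (i : ℕ)) * A ⟨m - 1, by omega⟩ j
        + (if hi : 0 < (i : ℕ) then A ⟨(i : ℕ) - 1, by omega⟩ j else 0) := by
  have him := i.isLt
  rw [Matrix.mul_apply]
  by_cases hi : 0 < (i : ℕ)
  · rw [dif_pos hi]
    have key : ∀ k : Fin m, C i k * A k j =
        (if k = (⟨m - 1, by omega⟩ : Fin m) then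
          (-1 : ℂ) ^ (m - 1 - (i : ℕ)) * esymmF ℂ m x (m - (i : ℕ)) * A k j else 0)
        + (if k = (⟨(i : ℕ) - 1, by omega⟩ : Fin m) then A k j else 0) := by
      intro k
      have hkm := k.isLt
      rw [hC]
      by_cases h1 : (i : ℕ) = (k : ℕ) + 1
      · have hk : k = (⟨(i : ℕ) - 1, by omega⟩ : Fin m) := Fin.ext (by simp only [Fin.val_mk]; omega)
        have hk2 : k ≠ (⟨m - 1, by omega⟩ : Fin m) := by
          intro h
          apply_fun Fin.val at h
          simp only [Fin.val_mk] at h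
          omega
        rw [if_pos h1, if_pos hk, if_neg hk2]
        ring
      · rw [if_neg h1]
        by_cases h2 : (k : ℕ) = m - 1
        · have hk : k = (⟨m - 1, by omega⟩ : Fin m) := Fin.ext (by simp only [Fin.val_mk]; omega)
          have hk2 : k ≠ (⟨(i : ℕ) - 1, by omega⟩ : Fin m) := by
            intro h
            apply_fun Fin.val at h
            simp at h
            omega
          rw [if_pos h2, if_pos hk, if_neg hk2]
          ring
        · have hk : k ≠ (⟨m - 1, by omega⟩ : Fin m) := by
            intro h; apply_fun Fin.val at h; simp only [Fin.val_mk] at h; omega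
          have hk2 : k ≠ (⟨(i : ℕ) - 1, by omega⟩ : Fin m) := by
            intro h; apply_fun Fin.val at h; simp only [Fin.val_mk] at h; omega
          rw [if_neg h2, if_neg hk, if_neg hk2]
          ring
    rw [Finset.sum_congr rfl (fun k _ => key k), Finset.sum_add_distrib,
      Finset.sum_ite_eq' Finset.univ, Finset.sum_ite_eq' Finset.univ]
    simp
  · rw [dif_neg hi, add_zero]
    have key : ∀ k : Fin m, C i k * A k j =
        (if k = (⟨m - 1, by omega⟩ : Fin m) then
          (-1 : ℂ) ^ (m - 1 - (i : ℕ)) * esymmF ℂ m x (m - (i : ℕ)) * A k j else 0) := by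
      intro k
      have hkm := k.isLt
      rw [hC]
      rw [if_neg (by omega)]
      by_cases h2 : (k : ℕ) = m - 1
      · have hk : k = (⟨m - 1, by omega⟩ : Fin m) := Fin.ext (by simp only [Fin.val_mk]; omega)
        rw [if_pos h2, if_pos hk]
      · have hk : k ≠ (⟨m - 1, by omega⟩ : Fin m) := by
          intro h; apply_fun Fin.val at h; simp only [Fin.val_mk] at h; omega
        rw [if_neg h2, if_neg hk]
        ring
    rw [Finset.sum_congr rfl (fun k _ => key k), Finset.sum_ite_eq' Finset.univ]
    simp

/-- Powers of the companion matrix of `g(x) = (x - x_1) ⋯ (x - x_m)` are (up to sign)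
hook Schur polynomials in the roots.  Indices here are 0-based: the entry `C^t(i,j)`
of the paper (1-based) is `(C ^ t) ⟨i-1⟩ ⟨j-1⟩` here. -/
theorem companion_pow_schur (m : ℕ) (hm : 1 ≤ m) (x : Fin m → ℂ)
    (C : Matrix (Fin m) (Fin m) ℂ)
    (hC : ∀ i j : Fin m, C i j =
      if (i : ℕ) = (j : ℕ) + 1 then 1
      else if (j : ℕ) = m - 1 then
        (-1 : ℂ) ^ (m - 1 - (i : ℕ)) * esymmF ℂ m x (m - (i : ℕ))
      else 0)
    (t : ℕ) (i j : Fin m) :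
    (m ≤ t + (j : ℕ) →
      (C ^ t) i j =
        (-1 : ℂ) ^ (m - 1 - (i : ℕ)) *
          hookSchur ℂ m (t + (j : ℕ) + 1 - m) (m - 1 - (i : ℕ)) x) ∧
    (t + (j : ℕ) < m →
      (C ^ t) i j = if (i : ℕ) = t + (j : ℕ) then 1 else 0) := by
  induction t generalizing i j with
  | zero =>
      constructor
      · intro h
        have := j.isLt
        omega
      · intro _
        rw [pow_zero, Matrix.one_apply]
        simp [Fin.ext_iff]
  | succ t ih =>
      have him := i.isLt
      have hjm := j.isLt
      rw [pow_succ', row_mul m hm x C (C ^ t) hC i j]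
      constructor
      · -- Schur regime at time t+1
        intro hms
        by_cases hB : t + (j : ℕ) < m
        · -- boundary : t + j = m - 1
          have htj : t + (j : ℕ) = m - 1 := by omega
          rw [(ih ⟨m - 1, by omega⟩ j).2 hB]
          rw [if_pos (by simp only [Fin.val_mk]; omega)]
          have hdite : (if hi : 0 < (i : ℕ) then
              (C ^ t) ⟨(i : ℕ) - 1, by omega⟩ j else 0) = 0 := by
            by_cases hi : 0 < (i : ℕ)
            · rw [dif_pos hi, (ih ⟨(i : ℕ) - 1, by omega⟩ j).2 hB,
                if_neg (by simp only [Fin.val_mk]; omega)]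
            · rw [dif_neg hi]
          rw [hdite, add_zero, mul_one]
          rw [show t + 1 + (j : ℕ) + 1 - m = 1 from by omega]
          rw [hookSchur_one_arm, hookSchur_zero_arm,
            show m - 1 - (i : ℕ) + 1 = m - (i : ℕ) from by omega]
        · -- interior : m ≤ t + j
          push_neg at hB
          set a := t + (j : ℕ) + 1 - m with ha_def
          have ha : 0 < a := by omega
          rw [(ih ⟨m - 1, by omega⟩ j).1 hB]
          rw [show m - 1 - ((⟨m - 1, by omega⟩ : Fin m) : ℕ) = 0 from by
            simp only [Fin.val_mk]; omega]
          rw [pow_zero, one_mul]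
          have hdite : (if hi : 0 < (i : ℕ) then
              (C ^ t) ⟨(i : ℕ) - 1, by omega⟩ j else 0)
              = (-1 : ℂ) ^ (m - (i : ℕ)) * hookSchur ℂ m a (m - (i : ℕ)) x := by
            by_cases hi : 0 < (i : ℕ)
            · rw [dif_pos hi, (ih ⟨(i : ℕ) - 1, by omega⟩ j).1 hB]
              rw [show m - 1 - ((⟨(i : ℕ) - 1, by omega⟩ : Fin m) : ℕ) = m - (i : ℕ) from by
                simp only [Fin.val_mk]; omega]
            · rw [dif_neg hi]
              rw [show m - (i : ℕ) = m from by omega]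
              rw [hookSchur_eq_zero m a m x ha (le_refl m), mul_zero]
          rw [hdite]
          have hpieri := pieri m a (m - 1 - (i : ℕ)) x ha
          rw [show m - 1 - (i : ℕ) + 1 = m - (i : ℕ) from by omega] at hpieri
          rw [hookSchur_zero_arm] at hpieri
          rw [show t + 1 + (j : ℕ) + 1 - m = a + 1 from by omega]
          have hsign : (-1 : ℂ) ^ (m - (i : ℕ)) = -(-1 : ℂ) ^ (m - 1 - (i : ℕ)) := by
            rw [show m - (i : ℕ) = (m - 1 - (i : ℕ)) + 1 from by omega, pow_succ]
            ring
          rw [hsign, ← ha_def]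
          linear_combination ((-1 : ℂ) ^ (m - 1 - (i : ℕ))) * hpieri
      · -- delta regime at time t+1
        intro hlt
        rw [(ih ⟨m - 1, by omega⟩ j).2 (by omega)]
        rw [if_neg (by simp only [Fin.val_mk]; omega), mul_zero, zero_add]
        by_cases hi : 0 < (i : ℕ)
        · rw [dif_pos hi, (ih ⟨(i : ℕ) - 1, by omega⟩ j).2 (by omega)]
          simp only [Fin.val_mk]
          by_cases hcond : (i : ℕ) - 1 = t + (j : ℕ)
          · rw [if_pos hcond, if_pos (by omega)]
          · rw [if_neg hcond, if_neg (by omega)]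
        · rw [dif_neg hi, if_neg (by omega)]
end

section
/- Let C be the m×m companion matrix of a monic degree-m polynomial g with roots x_1,...,x_m. Then for t ≥ m, the first-column entries satisfy |C^t(k+1, 1)| ≤ s_{(t+1-m, 1,...,1 with m-1-k ones)}(β,...,β) = (number of SSYT of shape (t+1-m,1,...,1) on alphabet {1,...,m}) · β^{t-k} whenever |x_j| ≤ β for all j. -/
lemma strictMono_cons {m b : ℕ} {a0 : Fin m} {c : Fin b → Fin m} (hc : StrictMono c)
    (h : ∀ (h1 : 0 < b), a0 < c ⟨0, h1⟩) : StrictMono (Fin.cons a0 c) := by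
  intro i j hij
  induction j using Fin.cases with
  | zero => exact absurd hij (Fin.not_lt_zero _)
  | succ j' =>
    induction i using Fin.cases with
    | zero =>
      rw [Fin.cons_zero, Fin.cons_succ]
      exact lt_of_lt_of_le (h j'.pos) (hc.monotone (Fin.le_def.mpr (Nat.zero_le _)))
    | succ i' =>
      rw [Fin.cons_succ, Fin.cons_succ]
      exact hc (Fin.succ_lt_succ_iff.mp hij)

lemma strictMono_tail {m b : ℕ} {c : Fin (b+1) → Fin m} (hc : StrictMono c) :
    StrictMono (Fin.tail c) := fun _ _ h => hc (Fin.succ_lt_succ_iff.mpr h)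

lemma monotone_tail {m b : ℕ} {c : Fin (b+1) → Fin m} (hc : Monotone c) :
    Monotone (Fin.tail c) := fun _ _ h => hc (Fin.succ_le_succ_iff.mpr h)

lemma monotone_cons {m a : ℕ} {a0 : Fin m} {w : Fin a → Fin m} (hw : Monotone w)
    (h : ∀ (h1 : 0 < a), a0 ≤ w ⟨0, h1⟩) : Monotone (Fin.cons a0 w) := by
  intro i j hij
  induction j using Fin.cases with
  | zero => rw [Fin.le_zero_iff.mp hij]
  | succ j' =>
    induction i using Fin.cases with
    | zero =>
      rw [Fin.cons_zero, Fin.cons_succ]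
      exact le_trans (h j'.pos) (hw (Fin.le_def.mpr (Nat.zero_le _)))
    | succ i' =>
      rw [Fin.cons_succ, Fin.cons_succ]
      exact hw (Fin.succ_le_succ_iff.mp hij)

/-- hook with one-cell row ≃ strict column of length b+1 -/
def eBase (m b : ℕ) : HookSSYT m 1 b ≃ {c : Fin (b+1) → Fin m // StrictMono c} where
  toFun T := ⟨Fin.cons (T.1.1 0) T.1.2,
    strictMono_cons T.2.2.1 (fun h1 => T.2.2.2 Nat.one_pos h1)⟩
  invFun d := ⟨(fun _ => d.1 0, Fin.tail d.1),
    monotone_const, strictMono_tail d.2,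
    fun _ _ => d.2 (Fin.succ_pos _)⟩
  left_inv T := by
    apply Subtype.ext
    refine Prod.ext ?_ ?_
    · funext i
      have : i = 0 := Subsingleton.elim _ _
      subst this
      simp
    · dsimp only
      exact Fin.tail_cons _ _
  right_inv d := Subtype.ext (Fin.cons_self_tail _)

/-- hook with no column ≃ monotone row -/
def e0 (m a : ℕ) : HookSSYT m a 0 ≃ {w : Fin a → Fin m // Monotone w} where
  toFun T := ⟨T.1.1, T.2.1⟩
  invFun w := ⟨(w.1, Fin.elim0), w.2, fun i => i.elim0, fun _ h1 => absurd h1 (lt_irrefl 0)⟩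
  left_inv T := by
    apply Subtype.ext
    refine Prod.ext rfl (funext fun i => i.elim0)
  right_inv w := rfl

/-- pairs with c0 ≤ w0 ≃ hooks with longer first row -/
def eCons (m a b : ℕ) :
    {p : (Fin (a+1) → Fin m) × (Fin (b+1) → Fin m) //
      (Monotone p.1 ∧ StrictMono p.2) ∧ ¬ (p.1 0 < p.2 0)} ≃ HookSSYT m (a+2) b where
  toFun p := ⟨(Fin.cons (p.1.2 0) p.1.1, Fin.tail p.1.2),
    monotone_cons p.2.1.1 (fun _ => le_of_not_gt p.2.2),
    strictMono_tail p.2.1.2,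
    fun _ h1 => by
      dsimp only
      rw [show ((⟨0, by omega⟩ : Fin (a+2))) = 0 from rfl, Fin.cons_zero]
      exact p.2.1.2 (Fin.succ_pos _)⟩
  invFun T := ⟨(Fin.tail T.1.1, Fin.cons (T.1.1 0) T.1.2),
    ⟨monotone_tail T.2.1,
     strictMono_cons T.2.2.1 (fun h1 => by
       refine lt_of_lt_of_le (T.2.2.2 (by omega) h1) ?_
       exact T.2.2.1.monotone (le_refl _))⟩,
    by
      simp only [Fin.cons_zero, Fin.tail]
      exact not_lt.mpr (T.2.1 (Fin.zero_le _))⟩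
  left_inv p := by
    apply Subtype.ext
    refine Prod.ext ?_ ?_ <;> dsimp only
    · exact Fin.tail_cons _ _
    · exact Fin.cons_self_tail _
  right_inv T := by
    apply Subtype.ext
    refine Prod.ext ?_ ?_ <;> dsimp only
    · exact Fin.cons_self_tail _
    · exact Fin.tail_cons _ _

/-- pairs with w0 < c0 ≃ hooks -/
def eHook (m a b : ℕ) :
    {p : (Fin (a+1) → Fin m) × (Fin (b+1) → Fin m) //
      (Monotone p.1 ∧ StrictMono p.2) ∧ (p.1 0 < p.2 0)} ≃ HookSSYT m (a+1) (b+1) where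
  toFun p := ⟨p.1, p.2.1.1, p.2.1.2, fun _ _ => p.2.2⟩
  invFun T := ⟨T.1, ⟨T.2.1, T.2.2.1⟩, T.2.2.2 (by omega) (by omega)⟩
  left_inv p := rfl
  right_inv T := rfl

noncomputable instance (m k ℓ : ℕ) : Fintype (HookSSYT m k ℓ) := Fintype.ofFinite _
noncomputable instance (m b : ℕ) : Fintype {c : Fin b → Fin m // StrictMono c} := Fintype.ofFinite _
noncomputable instance (m a : ℕ) : Fintype {w : Fin a → Fin m // Monotone w} := Fintype.ofFinite _

variable {R : Type*} [CommRing R]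


lemma hook1_sum (m b : ℕ) (x : Fin m → R) :
    ∑ T : HookSSYT m 1 b, (∏ i, x (T.1.1 i)) * ∏ j, x (T.1.2 j)
      = ∑ c : {c : Fin (b+1) → Fin m // StrictMono c}, ∏ j, x (c.1 j) := by
  apply Fintype.sum_equiv (eBase m b)
  intro T
  simp [eBase, Fin.prod_univ_succ]

lemma hook0_sum (m a : ℕ) (x : Fin m → R) :
    ∑ T : HookSSYT m a 0, (∏ i, x (T.1.1 i)) * ∏ j, x (T.1.2 j)
      = ∑ w : {w : Fin a → Fin m // Monotone w}, ∏ i, x (w.1 i) := by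
  apply Fintype.sum_equiv (e0 m a)
  intro T
  simp [e0]

def ePack (m a b : ℕ) (P : ∀ (w : Fin a → Fin m) (c : Fin b → Fin m), Prop) :
    {p : ({w : Fin a → Fin m // Monotone w} × {c : Fin b → Fin m // StrictMono c}) //
        P p.1.1 p.2.1}
      ≃ {p : (Fin a → Fin m) × (Fin b → Fin m) //
          (Monotone p.1 ∧ StrictMono p.2) ∧ P p.1 p.2} where
  toFun p := ⟨(p.1.1.1, p.1.2.1), ⟨p.1.1.2, p.1.2.2⟩, p.2⟩
  invFun q := ⟨(⟨q.1.1, q.2.1.1⟩, ⟨q.1.2, q.2.1.2⟩), q.2.2⟩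
  left_inv p := rfl
  right_inv q := rfl

lemma pieri_s18 (m a b : ℕ) (x : Fin m → R) :
    (∑ w : {w : Fin (a+1) → Fin m // Monotone w}, ∏ i, x (w.1 i)) *
    (∑ c : {c : Fin (b+1) → Fin m // StrictMono c}, ∏ j, x (c.1 j))
      = (∑ T : HookSSYT m (a+1) (b+1), (∏ i, x (T.1.1 i)) * ∏ j, x (T.1.2 j))
        + (∑ T : HookSSYT m (a+2) b, (∏ i, x (T.1.1 i)) * ∏ j, x (T.1.2 j)) := by
  classical
  rw [Finset.sum_mul_sum]
  rw [← Fintype.sum_prod_type (f := fun p :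
      ({w : Fin (a+1) → Fin m // Monotone w} × {c : Fin (b+1) → Fin m // StrictMono c}) =>
      (∏ i, x (p.1.1 i)) * ∏ j, x (p.2.1 j))]
  rw [← Fintype.sum_subtype_add_sum_subtype (fun p :
      ({w : Fin (a+1) → Fin m // Monotone w} × {c : Fin (b+1) → Fin m // StrictMono c}) =>
      p.1.1 0 < p.2.1 0)
      (fun p => (∏ i, x (p.1.1 i)) * ∏ j, x (p.2.1 j))]
  congr 1
  · apply Fintype.sum_equiv ((ePack m (a+1) (b+1) (fun w c => w 0 < c 0)).trans (eHook m a b))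
    intro p
    rfl
  · apply Fintype.sum_equiv ((ePack m (a+1) (b+1) (fun w c => ¬ w 0 < c 0)).trans (eCons m a b))
    rintro ⟨⟨⟨w, hw⟩, ⟨c, hc⟩⟩, hlt⟩
    show (∏ i, x (w i)) * ∏ j, x (c j)
      = (∏ i, x ((Fin.cons (c 0) w : Fin (a+2) → Fin m) i)) * ∏ j : Fin b, x (c j.succ)
    rw [Fin.prod_univ_succ (f := fun i => x ((Fin.cons (c 0) w : Fin (a+2) → Fin m) i)),
        Fin.prod_univ_succ (f := fun j => x (c j))]
    simp only [Fin.cons_zero, Fin.cons_succ]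
    ring

lemma hook_isEmpty (m a : ℕ) (ha : 0 < a) : IsEmpty (HookSSYT m a m) := by
  constructor
  rintro ⟨⟨w, c⟩, hw, hc, hhook⟩
  have hf : StrictMono (Fin.cons (w ⟨0, ha⟩) c : Fin (m+1) → Fin m) :=
    strictMono_cons hc (fun h1 => hhook ha h1)
  have := Fintype.card_le_of_injective _ hf.injective
  simp at this


lemma map_orderEmbOfFin {m b : ℕ} (S : Finset (Fin m)) (h : S.card = b) :
    Finset.univ.map (S.orderEmbOfFin h).toEmbedding = S := by
  apply Finset.coe_injective
  rw [Finset.coe_map, Finset.coe_univ, Set.image_univ]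
  exact S.range_orderEmbOfFin h

lemma esymm_eq_strict {R : Type*} [CommRing R] (m b : ℕ) (x : Fin m → R) :
    ∑ S ∈ Finset.univ.powersetCard b, ∏ i ∈ S, x i
      = ∑ c : {c : Fin b → Fin m // StrictMono c}, ∏ j, x (c.1 j) := by
  refine Finset.sum_bij' (fun S hS => (⟨S.orderEmbOfFin (Finset.mem_powersetCard.mp hS).2,
      (S.orderEmbOfFin _).strictMono⟩ : {c : Fin b → Fin m // StrictMono c}))
    (fun c _ => Finset.univ.map ⟨c.1, c.2.injective⟩) ?_ ?_ ?_ ?_ ?_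
  · intro S hS; exact Finset.mem_univ _
  · intro c _
    rw [Finset.mem_powersetCard]
    exact ⟨Finset.subset_univ _, by simp⟩
  · intro S hS
    exact map_orderEmbOfFin S (Finset.mem_powersetCard.mp hS).2
  · intro c _
    apply Subtype.ext
    symm
    apply Finset.orderEmbOfFin_unique
    · intro i; simp
    · exact c.2
  · intro S hS
    conv_lhs => rw [← map_orderEmbOfFin S (Finset.mem_powersetCard.mp hS).2]
    rw [Finset.prod_map]
    rfl

lemma esymmF_eq_strict {R : Type*} [CommRing R] (m b : ℕ) (x : Fin m → R) :
    esymmF R m x b = ∑ c : {c : Fin b → Fin m // StrictMono c}, ∏ j, x (c.1 j) :=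
  esymm_eq_strict m b x

section MatrixSec

variable (m : ℕ) (x : Fin m → ℂ) (C : Matrix (Fin m) (Fin m) ℂ)

lemma low_pow (hm : 0 < m)
    (hC : ∀ i j : Fin m, C i j =
      if (i : ℕ) = (j : ℕ) + 1 then 1
      else if (j : ℕ) = m - 1 then
        (-1 : ℂ) ^ (m - 1 - (i : ℕ)) * esymmF ℂ m x (m - (i : ℕ))
      else 0) :
    ∀ (s : ℕ), s < m → ∀ j : Fin m, (C ^ s) j ⟨0, hm⟩ = if (j : ℕ) = s then 1 else 0 := by
  intro s
  induction s with
  | zero =>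
    intro _ j
    rw [pow_zero, Matrix.one_apply]
    simp [Fin.ext_iff]
  | succ s ih =>
    intro hs j
    rw [pow_succ', Matrix.mul_apply]
    have h1 : ∀ i : Fin m, (C ^ s) i ⟨0, hm⟩ = if i = ⟨s, by omega⟩ then 1 else 0 := by
      intro i
      rw [ih (by omega) i]
      simp [Fin.ext_iff]
    simp_rw [h1, mul_ite, mul_one, mul_zero, Finset.sum_ite_eq' Finset.univ, Finset.mem_univ,
      if_true]
    rw [hC]
    have h2 : (s : ℕ) ≠ m - 1 := by omega
    simp [h2]

lemma main_id (hm : 0 < m)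
    (hC : ∀ i j : Fin m, C i j =
      if (i : ℕ) = (j : ℕ) + 1 then 1
      else if (j : ℕ) = m - 1 then
        (-1 : ℂ) ^ (m - 1 - (i : ℕ)) * esymmF ℂ m x (m - (i : ℕ))
      else 0) :
    ∀ t, m ≤ t → ∀ (k : ℕ) (hk : k < m),
      (C ^ t) ⟨k, hk⟩ ⟨0, hm⟩
        = (-1)^(m-1-k) * ∑ T : HookSSYT m (t+1-m) (m-1-k),
            (∏ i, x (T.1.1 i)) * ∏ j, x (T.1.2 j) := by
  intro t ht
  induction t, ht using Nat.le_induction with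
  | base =>
    intro k hk
    have hCm : C ^ m = C * C ^ (m - 1) := by
      rw [← pow_succ']
      congr 1
      omega
    rw [hCm, Matrix.mul_apply]
    have h1 : ∀ i : Fin m, (C ^ (m-1)) i ⟨0, hm⟩ = if i = ⟨m-1, by omega⟩ then 1 else 0 := by
      intro i
      rw [low_pow m x C hm hC (m-1) (by omega) i]
      simp [Fin.ext_iff]
    simp_rw [h1, mul_ite, mul_one, mul_zero, Finset.sum_ite_eq' Finset.univ, Finset.mem_univ,
      if_true]
    rw [hC]
    rw [if_neg (show ¬ (k = (m-1) + 1) by omega), if_pos (show (m-1 : ℕ) = m - 1 from rfl)]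
    congr 1
    rw [show m + 1 - m = 1 by omega, hook1_sum m (m-1-k) x]
    exact (congrArg (esymmF ℂ m x) (show m - k = (m-1-k) + 1 by omega)).trans
      (esymmF_eq_strict m ((m-1-k)+1) x)
  | succ t ht ih =>
    intro k hk
    rw [pow_succ', Matrix.mul_apply]
    by_cases hk0 : k = 0
    · subst hk0
      have hrow : ∀ j : Fin m, C ⟨0, hk⟩ j * (C ^ t) j ⟨0, hm⟩
          = if j = ⟨m-1, by omega⟩ then
              ((-1:ℂ)^(m-1) * esymmF ℂ m x m) * (C ^ t) j ⟨0, hm⟩ else 0 := by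
        intro j
        rw [hC]
        rcases eq_or_ne (j : ℕ) (m-1) with hj | hj
        · rw [if_neg (show ¬ ((0:ℕ) = (j:ℕ) + 1) by omega), if_pos hj,
            if_pos (Fin.ext hj : j = ⟨m-1, by omega⟩)]
          norm_num
        · rw [if_neg (show ¬ ((0:ℕ) = (j:ℕ) + 1) by omega), if_neg hj,
            if_neg (fun h => hj (by rw [h]))]
          ring
      rw [Finset.sum_congr rfl (fun j _ => hrow j), Finset.sum_ite_eq' Finset.univ,
        if_pos (Finset.mem_univ _)]
      rw [ih (m-1) (by omega)]
      rw [show m - 1 - (m - 1) = 0 by omega, show m - 1 - 0 = m - 1 by omega]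
      rw [pow_zero, one_mul]
      rw [show t + 1 - m = (t-m) + 1 by omega, show t + 1 + 1 - m = (t-m) + 2 by omega,
        hook0_sum m ((t-m)+1) x]
      rw [show esymmF ℂ m x m = ∑ c : {c : Fin ((m-1)+1) → Fin m // StrictMono c},
            ∏ j, x (c.1 j) from
        (congrArg (esymmF ℂ m x) (show m = (m-1) + 1 by omega)).trans
          (esymmF_eq_strict m ((m-1)+1) x)]
      have hp := pieri_s18 m (t-m) (m-1) x
      have hempty : (∑ T : HookSSYT m ((t-m)+1) ((m-1)+1),
          (∏ i, x (T.1.1 i)) * ∏ j, x (T.1.2 j)) = 0 := by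
        haveI : IsEmpty (HookSSYT m ((t-m)+1) ((m-1)+1)) := by
          rw [show (m-1)+1 = m by omega]
          exact hook_isEmpty m ((t-m)+1) (by omega)
        rw [Finset.univ_eq_empty, Finset.sum_empty]
      rw [hempty, zero_add] at hp
      linear_combination ((-1:ℂ)^(m-1)) * hp
    · have hne : (⟨k-1, by omega⟩ : Fin m) ≠ (⟨m-1, by omega⟩ : Fin m) := by
        simp only [ne_eq, Fin.mk.injEq]
        omega
      rw [Fintype.sum_eq_add (⟨k-1, by omega⟩ : Fin m) (⟨m-1, by omega⟩ : Fin m) hne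
        (fun j hj => by
          have h1' : (j:ℕ) ≠ k - 1 := fun h => hj.1 (Fin.ext h)
          have h2' : (j:ℕ) ≠ m - 1 := fun h => hj.2 (Fin.ext h)
          rw [hC, if_neg (show ¬ (k = (j:ℕ) + 1) by omega), if_neg h2']
          ring)]
      rw [hC, hC]
      rw [if_pos (show (k:ℕ) = (k-1) + 1 by omega),
        if_neg (show ¬ ((k:ℕ) = (m-1) + 1) by omega),
        if_pos (show ((m-1:ℕ)) = m - 1 from rfl)]
      rw [ih (k-1) (by omega), ih (m-1) (by omega)]
      rw [show m - 1 - (m - 1) = 0 by omega, pow_zero, one_mul]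
      rw [show m - 1 - (k-1) = (m-1-k) + 1 by omega,
        show t + 1 - m = (t-m) + 1 by omega, show t + 1 + 1 - m = (t-m) + 2 by omega,
        hook0_sum m ((t-m)+1) x]
      rw [show esymmF ℂ m x (m - k) = ∑ c : {c : Fin ((m-1-k)+1) → Fin m // StrictMono c},
            ∏ j, x (c.1 j) from
        (congrArg (esymmF ℂ m x) (show m - k = (m-1-k) + 1 by omega)).trans
          (esymmF_eq_strict m ((m-1-k)+1) x)]
      have hp := pieri_s18 m (t-m) (m-1-k) x
      linear_combination ((-1:ℂ)^(m-1-k)) * hp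

end MatrixSec

/-- Bounding the first-column entries of powers of the companion matrix: if all roots
satisfy `|x_j| ≤ β`, then for `t ≥ m` and `0 ≤ k ≤ m-1` (the paper's entry
`C^t(k+1,1)` is `(C ^ t) ⟨k⟩ ⟨0⟩` here),
`|C^t(k+1,1)| ≤ s_{(t+1-m, 1^{m-1-k})}(β, ..., β)`, and this evaluation equals the
number of SSYT of shape `(t+1-m, 1^{m-1-k})` on `{1,...,m}` times `β^{t-k}`. -/
theorem companion_pow_entry_bound (m : ℕ) (hm : 1 ≤ m) (x : Fin m → ℂ)
    (β : ℝ) (hx : ∀ j, ‖x j‖ ≤ β)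
    (C : Matrix (Fin m) (Fin m) ℂ)
    (hC : ∀ i j : Fin m, C i j =
      if (i : ℕ) = (j : ℕ) + 1 then 1
      else if (j : ℕ) = m - 1 then
        (-1 : ℂ) ^ (m - 1 - (i : ℕ)) * esymmF ℂ m x (m - (i : ℕ))
      else 0)
    (t : ℕ) (ht : m ≤ t) (k : ℕ) (hk : k < m) :
    ‖(C ^ t) ⟨k, hk⟩ ⟨0, by omega⟩‖
        ≤ hookSchur ℝ m (t + 1 - m) (m - 1 - k) (fun _ => β) ∧
    hookSchur ℝ m (t + 1 - m) (m - 1 - k) (fun _ => β)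
        = (Nat.card (HookSSYT m (t + 1 - m) (m - 1 - k)) : ℝ) * β ^ (t - k) := by
  have hm0 : 0 < m := hm
  have hb0 : 0 ≤ β := le_trans (norm_nonneg _) (hx ⟨0, hm0⟩)
  have hAB : (t + 1 - m) + (m - 1 - k) = t - k := by omega
  have hterm : ∀ T : HookSSYT m (t+1-m) (m-1-k),
      (∏ i, (fun _ : Fin m => β) (T.1.1 i)) * ∏ j, (fun _ : Fin m => β) (T.1.2 j)
        = β ^ (t-k) := by
    intro T
    simp only [Finset.prod_const, Finset.card_univ, Fintype.card_fin]
    rw [← pow_add, hAB]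
  have hsum : hookSchur ℝ m (t + 1 - m) (m - 1 - k) (fun _ => β)
      = ∑ _T : HookSSYT m (t+1-m) (m-1-k), β ^ (t-k) := by
    rw [hookSchur, finsum_eq_sum_of_fintype]
    exact Finset.sum_congr rfl (fun T _ => hterm T)
  constructor
  · rw [main_id m x C hm0 hC t ht k hk]
    rw [norm_mul, norm_pow, show ‖(-1 : ℂ)‖ = 1 by simp, one_pow, one_mul, hsum]
    refine le_trans (norm_sum_le _ _) (Finset.sum_le_sum ?_)
    intro T _
    rw [norm_mul]
    have b1 : ‖∏ i, x (T.1.1 i)‖ ≤ β ^ (t+1-m) := by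
      rw [norm_prod]
      calc ∏ i, ‖x (T.1.1 i)‖ ≤ ∏ _i : Fin (t+1-m), β :=
            Finset.prod_le_prod (fun i _ => norm_nonneg _) (fun i _ => hx _)
        _ = β ^ (t+1-m) := by simp [Finset.prod_const]
    have b2 : ‖∏ j, x (T.1.2 j)‖ ≤ β ^ (m-1-k) := by
      rw [norm_prod]
      calc ∏ j, ‖x (T.1.2 j)‖ ≤ ∏ _j : Fin (m-1-k), β :=
            Finset.prod_le_prod (fun j _ => norm_nonneg _) (fun j _ => hx _)
        _ = β ^ (m-1-k) := by simp [Finset.prod_const]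
    calc ‖∏ i, x (T.1.1 i)‖ * ‖∏ j, x (T.1.2 j)‖
        ≤ β ^ (t+1-m) * β ^ (m-1-k) :=
          mul_le_mul b1 b2 (norm_nonneg _) (pow_nonneg hb0 _)
      _ = β ^ (t-k) := by rw [← pow_add, hAB]
  · rw [hsum, Finset.sum_const, Finset.card_univ, nsmul_eq_mul, Nat.card_eq_fintype_card]
end
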